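/- Let T > 0, ρ > 0, θ ≥ 0, and let Y be a fixed right-continuous function of bounded variation on [0,T]. Then the cost functional X ↦ (1/2)∫∫ e^{-ρ|t-s|} dX_s dX_t + ∫_{[0,T]}∫_{[0,t)} e^{-ρ(t-s)} dY_s dX_t + (1/2)∑_t ΔX_t ΔY_t + θ ∑_t (ΔX_t)^2 is strictly convex on the affine space of right-continuous bounded-variation functions X on [0,T] with X_{0-} = x and X_T = 0. In particular, for distinct X^0, X^1 in this space, ∫∫ e^{-ρ|t-s|} d(X^1 - X^0)_s d(X^1 - X^0)_t > 0. -/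

import Mathlib

open Real MeasureTheory

/-- Iterated integral of a kernel `K` against a pair of (finite) measures:
`∫∫ K t s db(s) da(t)` (outer measure `a` in the variable `t`, inner `b` in `s`). -/
noncomputable def doubleInt (K : ℝ → ℝ → ℝ) (a b : Measure ℝ) : ℝ :=
  ∫ t, (∫ s, K t s ∂b) ∂a

/-- The bilinear extension of `doubleInt` to "signed measures" represented by their
Jordan pairs: the strategy `X` has Stieltjes measure `p - m`, the strategy `Y` has
Stieltjes measure `q - n`; this computes `∫∫ K t s d(q-n)(s) d(p-m)(t)`. -/
noncomputable def bilinInt (K : ℝ → ℝ → ℝ) (p m q n : Measure ℝ) : ℝ :=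
  doubleInt K p q - doubleInt K p n - doubleInt K m q + doubleInt K m n

/-- The expected cost functional
`C(X|Y) = (1/2)∫∫ e^{-ρ|t-s|} dX dX + ∫_{[0,T]}∫_{[0,t)} e^{-ρ(t-s)} dY_s dX_t
  + (1/2)∑_t ΔX_t ΔY_t + θ ∑_t (ΔX_t)²`,
where the strategies `X` and `Y` are encoded by the Jordan pairs `(Xp, Xm)` and
`(Yp, Ym)` of their Stieltjes measures; the two jump sums are the double integrals
against the diagonal kernel. -/
noncomputable def liqCost (ρ θ : ℝ) (Xp Xm Yp Ym : Measure ℝ) : ℝ :=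
  (1/2) * bilinInt (fun t s => Real.exp (-ρ*|t-s|)) Xp Xm Xp Xm
    + bilinInt (fun t s => if s < t then Real.exp (-ρ*(t-s)) else 0) Xp Xm Yp Ym
    + (1/2) * bilinInt (fun t s => if s = t then 1 else 0) Xp Xm Yp Ym
    + θ * bilinInt (fun t s => if s = t then 1 else 0) Xp Xm Xp Xm

namespace CostAux

open Set Filter
open scoped ENNReal

variable {J : ℝ → ℝ → ℝ} {a a' b b' : Measure ℝ}

lemma inner_int (hJm : Measurable (Function.uncurry J)) (hJb : ∀ t s, |J t s| ≤ 1)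
    (t : ℝ) (b : Measure ℝ) [IsFiniteMeasure b] : Integrable (fun s => J t s) b := by
  refine Integrable.mono' (integrable_const 1)
    ((hJm.comp measurable_prodMk_left).aestronglyMeasurable)
    (Eventually.of_forall fun s => ?_)
  simpa [Real.norm_eq_abs] using hJb t s

lemma outer_sm (hJm : Measurable (Function.uncurry J)) (b : Measure ℝ) [SFinite b] :
    StronglyMeasurable fun t => ∫ s, J t s ∂b :=
  hJm.stronglyMeasurable.integral_prod_right'

lemma outer_int (hJm : Measurable (Function.uncurry J)) (hJb : ∀ t s, |J t s| ≤ 1)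
    (a b : Measure ℝ) [IsFiniteMeasure a] [IsFiniteMeasure b] :
    Integrable (fun t => ∫ s, J t s ∂b) a := by
  refine Integrable.mono' (integrable_const ((b Set.univ).toReal))
    (outer_sm hJm b).aestronglyMeasurable (Eventually.of_forall fun t => ?_)
  calc ‖∫ s, J t s ∂b‖ ≤ ∫ s, ‖J t s‖ ∂b := norm_integral_le_integral_norm _
    _ ≤ ∫ _s, (1:ℝ) ∂b := by
          refine integral_mono (inner_int hJm hJb t b).norm (integrable_const 1) fun s => ?_
          simpa [Real.norm_eq_abs] using hJb t s
    _ = (b Set.univ).toReal := by simp [Measure.real]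

lemma dI_add_left (hJm : Measurable (Function.uncurry J)) (hJb : ∀ t s, |J t s| ≤ 1)
    [IsFiniteMeasure a] [IsFiniteMeasure a'] [IsFiniteMeasure b] :
    doubleInt J (a + a') b = doubleInt J a b + doubleInt J a' b :=
  integral_add_measure (outer_int hJm hJb a b) (outer_int hJm hJb a' b)

lemma dI_smul_left (c : ℝ≥0∞) : doubleInt J (c • a) b = c.toReal * doubleInt J a b := by
  simp [doubleInt, integral_smul_measure, smul_eq_mul]

lemma dI_add_right (hJm : Measurable (Function.uncurry J)) (hJb : ∀ t s, |J t s| ≤ 1)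
    [IsFiniteMeasure a] [IsFiniteMeasure b] [IsFiniteMeasure b'] :
    doubleInt J a (b + b') = doubleInt J a b + doubleInt J a b' := by
  unfold doubleInt
  rw [← integral_add (outer_int hJm hJb a b) (outer_int hJm hJb a b')]
  exact integral_congr_ae (Eventually.of_forall fun t =>
    integral_add_measure (inner_int hJm hJb t b) (inner_int hJm hJb t b'))

lemma dI_smul_right (c : ℝ≥0∞) : doubleInt J a (c • b) = c.toReal * doubleInt J a b := by
  unfold doubleInt
  rw [← integral_const_mul]
  exact integral_congr_ae (Eventually.of_forall fun t => by
    show ∫ s, J t s ∂(c • b) = c.toReal * ∫ s, J t s ∂b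
    rw [integral_smul_measure]; simp)

lemma smul_fin (c : ℝ≥0∞) (hc : c ≠ ∞) (μ : Measure ℝ) [IsFiniteMeasure μ] :
    IsFiniteMeasure (c • μ) :=
  ⟨by rw [Measure.smul_apply, smul_eq_mul]
      exact ENNReal.mul_lt_top hc.lt_top (measure_lt_top μ _)⟩

lemma bilin_comb_left (hJm : Measurable (Function.uncurry J)) (hJb : ∀ t s, |J t s| ≤ 1)
    {α : ℝ} (h0 : 0 ≤ α) (h1 : 0 ≤ 1 - α)
    (p1 m1 p0 m0 q n : Measure ℝ)
    [IsFiniteMeasure p1] [IsFiniteMeasure m1] [IsFiniteMeasure p0] [IsFiniteMeasure m0]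
    [IsFiniteMeasure q] [IsFiniteMeasure n] :
    bilinInt J (ENNReal.ofReal α • p1 + ENNReal.ofReal (1-α) • p0)
        (ENNReal.ofReal α • m1 + ENNReal.ofReal (1-α) • m0) q n
      = α * bilinInt J p1 m1 q n + (1-α) * bilinInt J p0 m0 q n := by
  haveI := smul_fin (ENNReal.ofReal α) ENNReal.ofReal_ne_top p1
  haveI := smul_fin (ENNReal.ofReal α) ENNReal.ofReal_ne_top m1
  haveI := smul_fin (ENNReal.ofReal (1-α)) ENNReal.ofReal_ne_top p0
  haveI := smul_fin (ENNReal.ofReal (1-α)) ENNReal.ofReal_ne_top m0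
  unfold bilinInt
  simp only [dI_add_left hJm hJb, dI_smul_left, ENNReal.toReal_ofReal h0,
    ENNReal.toReal_ofReal h1]
  ring

lemma bilin_comb_right (hJm : Measurable (Function.uncurry J)) (hJb : ∀ t s, |J t s| ≤ 1)
    {α : ℝ} (h0 : 0 ≤ α) (h1 : 0 ≤ 1 - α)
    (p m q1 n1 q0 n0 : Measure ℝ)
    [IsFiniteMeasure p] [IsFiniteMeasure m] [IsFiniteMeasure q1] [IsFiniteMeasure n1]
    [IsFiniteMeasure q0] [IsFiniteMeasure n0] :
    bilinInt J p m (ENNReal.ofReal α • q1 + ENNReal.ofReal (1-α) • q0)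
        (ENNReal.ofReal α • n1 + ENNReal.ofReal (1-α) • n0)
      = α * bilinInt J p m q1 n1 + (1-α) * bilinInt J p m q0 n0 := by
  haveI := smul_fin (ENNReal.ofReal α) ENNReal.ofReal_ne_top q1
  haveI := smul_fin (ENNReal.ofReal α) ENNReal.ofReal_ne_top n1
  haveI := smul_fin (ENNReal.ofReal (1-α)) ENNReal.ofReal_ne_top q0
  haveI := smul_fin (ENNReal.ofReal (1-α)) ENNReal.ofReal_ne_top n0
  unfold bilinInt
  simp only [dI_add_right hJm hJb, dI_smul_right, ENNReal.toReal_ofReal h0,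
    ENNReal.toReal_ofReal h1]
  ring

lemma bilin_diff (hJm : Measurable (Function.uncurry J)) (hJb : ∀ t s, |J t s| ≤ 1)
    (X1p X1m X0p X0m : Measure ℝ)
    [IsFiniteMeasure X1p] [IsFiniteMeasure X1m] [IsFiniteMeasure X0p] [IsFiniteMeasure X0m] :
    bilinInt J (X1p + X0m) (X0p + X1m) (X1p + X0m) (X0p + X1m)
      = bilinInt J X1p X1m X1p X1m - bilinInt J X1p X1m X0p X0m
        - bilinInt J X0p X0m X1p X1m + bilinInt J X0p X0m X0p X0m := by
  unfold bilinInt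
  simp only [dI_add_left hJm hJb, dI_add_right hJm hJb]
  ring


lemma diag_meas : Measurable (Function.uncurry (fun t s : ℝ => if s = t then (1:ℝ) else 0)) := by
  have h : MeasurableSet {p : ℝ × ℝ | p.2 = p.1} := measurableSet_eq_fun measurable_snd measurable_fst
  exact Measurable.ite h measurable_const measurable_const

lemma diag_bdd : ∀ t s : ℝ, |(fun t s : ℝ => if s = t then (1:ℝ) else 0) t s| ≤ 1 := by
  intro t s; dsimp only; split <;> norm_num

lemma diag_inner (b : Measure ℝ) [IsFiniteMeasure b] (t : ℝ) :
    ∫ s, (if s = t then (1:ℝ) else 0) ∂b = (b {t}).toReal := by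
  have h : (fun s => if s = t then (1:ℝ) else 0) = Set.indicator {t} (fun _ => (1:ℝ)) := by
    funext s
    simp [Set.indicator_apply]
  rw [h, integral_indicator_const (1:ℝ) (measurableSet_singleton t)]
  simp [Measure.real]

lemma diag_nonneg (P M : Measure ℝ) [IsFiniteMeasure P] [IsFiniteMeasure M] :
    0 ≤ bilinInt (fun t s => if s = t then (1:ℝ) else 0) P M P M := by
  classical
  set f : ℝ → ℝ := fun t => (P {t}).toReal - (M {t}).toReal with hf
  have hCb : (0:ℝ) ≤ (P Set.univ).toReal + (M Set.univ).toReal := by positivity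
  have hfb : ∀ t, |f t| ≤ (P Set.univ).toReal + (M Set.univ).toReal := by
    intro t
    refine (abs_sub _ _).trans (add_le_add ?_ ?_) <;>
      · rw [abs_of_nonneg ENNReal.toReal_nonneg]
        exact ENNReal.toReal_mono (measure_ne_top _ _) (measure_mono (Set.subset_univ _))
  have hfsm : StronglyMeasurable f := by
    have h1 := (outer_sm (J := fun t s => if s = t then (1:ℝ) else 0) diag_meas P)
    have h2 := (outer_sm (J := fun t s => if s = t then (1:ℝ) else 0) diag_meas M)
    have := h1.sub h2
    simp only [diag_inner] at this
    exact this
  have hfint : ∀ (μ : Measure ℝ), IsFiniteMeasure μ → Integrable f μ := by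
    intro μ hμ
    haveI := hμ
    exact Integrable.mono' (integrable_const _) hfsm.aestronglyMeasurable
      (Filter.Eventually.of_forall fun t => by
        simpa [Real.norm_eq_abs] using hfb t)
  -- countable set of atoms
  have hcnt : ∀ (μ : Measure ℝ), SFinite μ → {t : ℝ | μ {t} ≠ 0}.Countable := by
    intro μ hμ
    haveI := hμ
    have := Measure.countable_meas_level_set_pos (μ := μ) (g := (id : ℝ → ℝ)) measurable_id
    simpa [Set.setOf_eq_eq_singleton, pos_iff_ne_zero] using this
  set A : Set ℝ := {t : ℝ | P {t} ≠ 0} ∪ {t : ℝ | M {t} ≠ 0} with hA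
  have hAc : A.Countable := (hcnt P inferInstance).union (hcnt M inferInstance)
  have hAm : MeasurableSet A := hAc.measurableSet
  have hsum : ∀ (μ : Measure ℝ), IsFiniteMeasure μ →
      Summable fun x : A => (μ {(x : ℝ)}).toReal * f x := by
    intro μ hμ
    haveI := hμ
    have htop : ∑' x : A, μ {(x : ℝ)} ≠ ∞ := by
      have h := tsum_measure_preimage_singleton (μ := μ) hAc (f := (id : ℝ → ℝ))
        (fun y _ => measurableSet_singleton y)
      simp only [Set.preimage_id] at h
      rw [h]
      exact measure_ne_top _ _
    have hS : Summable fun x : A => (μ {(x : ℝ)}).toReal := ENNReal.summable_toReal htop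
    refine Summable.of_abs ?_
    refine Summable.of_nonneg_of_le (fun x => abs_nonneg _)
      (fun x => ?_) (hS.mul_right ((P Set.univ).toReal + (M Set.univ).toReal))
    rw [abs_mul, abs_of_nonneg ENNReal.toReal_nonneg]
    exact mul_le_mul_of_nonneg_left (hfb _) ENNReal.toReal_nonneg
  have key : ∀ (μ : Measure ℝ), IsFiniteMeasure μ →
      ∫ t, f t ∂μ = ∑' x : A, (μ {(x : ℝ)}).toReal * f x := by
    intro μ hμ
    haveI := hμ
    have hint := hfint μ hμ
    have h1 : ∫ t, f t ∂μ = ∫ t in A, f t ∂μ + ∫ t in Aᶜ, f t ∂μ :=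
      (integral_add_compl hAm hint).symm
    have h2 : ∫ t in Aᶜ, f t ∂μ = 0 := by
      rw [setIntegral_congr_fun hAm.compl (g := fun _ => (0:ℝ)) ?_, integral_zero]
      intro t ht
      simp only [hA, Set.mem_compl_iff, Set.mem_union, Set.mem_setOf_eq, not_or, not_not] at ht
      simp [hf, ht.1, ht.2]
    have h3 : ∫ t in A, f t ∂μ = ∑' x : A, (μ {(x : ℝ)}).toReal • f x :=
      setIntegral_countable f hAc hint.integrableOn
    rw [h1, h2, h3, add_zero]
    simp [smul_eq_mul]
  have hPint : ∀ (b μ : Measure ℝ), IsFiniteMeasure b → IsFiniteMeasure μ →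
      Integrable (fun t => (b {t}).toReal) μ := by
    intro b μ hb hμ
    haveI := hb; haveI := hμ
    have hsm : StronglyMeasurable fun t => ((b {t}).toReal) := by
      have := outer_sm (J := fun t s => if s = t then (1:ℝ) else 0) diag_meas b
      simpa [diag_inner] using this
    exact Integrable.mono' (integrable_const ((b Set.univ).toReal)) hsm.aestronglyMeasurable
      (Filter.Eventually.of_forall fun t => by
        rw [Real.norm_eq_abs, abs_of_nonneg ENNReal.toReal_nonneg]
        exact ENNReal.toReal_mono (measure_ne_top _ _) (measure_mono (Set.subset_univ _)))
  have hexp : bilinInt (fun t s => if s = t then (1:ℝ) else 0) P M P M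
      = ∫ t, f t ∂P - ∫ t, f t ∂M := by
    unfold bilinInt doubleInt
    simp only [diag_inner]
    rw [integral_sub (hPint P P inferInstance inferInstance) (hPint M P inferInstance inferInstance),
      integral_sub (hPint P M inferInstance inferInstance) (hPint M M inferInstance inferInstance)]
    ring
  rw [hexp, key P inferInstance, key M inferInstance, ← Summable.tsum_sub (hsum P inferInstance)
    (hsum M inferInstance)]
  refine tsum_nonneg fun x => ?_
  have : (P {(x : ℝ)}).toReal * f x - (M {(x : ℝ)}).toReal * f x = f x * f x := by
    simp only [hf]; ring
  rw [this]
  exact mul_self_nonneg _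


/-- weight `e^{-ρ t}` as an `ℝ≥0∞`-density. -/
noncomputable def expW (ρ : ℝ) : ℝ → ℝ≥0∞ := fun t => ENNReal.ofReal (Real.exp (-ρ*t))

lemma expW_meas (ρ : ℝ) : Measurable (expW ρ) :=
  ENNReal.measurable_ofReal.comp (Real.measurable_exp.comp (measurable_id.const_mul (-ρ)))

lemma expW_ne_top (ρ t : ℝ) : expW ρ t ≠ ∞ := ENNReal.ofReal_ne_top

lemma ae_mem_Icc {T : ℝ} (a : Measure ℝ) (ha : a (Set.Icc 0 T)ᶜ = 0) :
    ∀ᵐ t ∂a, t ∈ Set.Icc 0 T := by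
  rw [ae_iff]
  simpa [Set.compl_def] using ha

lemma nu_univ_ne_top {ρ T : ℝ} (hρ : 0 < ρ) (a : Measure ℝ) [IsFiniteMeasure a]
    (ha : a (Set.Icc 0 T)ᶜ = 0) : a.withDensity (expW ρ) Set.univ ≠ ∞ := by
  rw [withDensity_apply _ MeasurableSet.univ, Measure.restrict_univ]
  have hle : ∫⁻ t, expW ρ t ∂a ≤ ∫⁻ _, 1 ∂a := by
    refine lintegral_mono_ae ((ae_mem_Icc a ha).mono fun t ht => ?_)
    refine ENNReal.ofReal_le_one.mpr (Real.exp_le_one_iff.mpr ?_)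
    have := ht.1
    nlinarith
  refine ne_top_of_le_ne_top ?_ hle
  simp [measure_ne_top]

lemma exp_kernel_le_one (ρ : ℝ) (hρ : 0 < ρ) (t s : ℝ) : Real.exp (-ρ*|t-s|) ≤ 1 :=
  Real.exp_le_one_iff.mpr (by nlinarith [abs_nonneg (t-s)])

lemma exp_kernel_meas (ρ : ℝ) :
    Measurable (Function.uncurry (fun t s : ℝ => Real.exp (-ρ*|t-s|))) := by
  apply Measurable.comp Real.measurable_exp
  exact (measurable_const.mul ((measurable_fst.sub measurable_snd).abs))

lemma exp_kernel_bdd (ρ : ℝ) (hρ : 0 < ρ) :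
    ∀ t s : ℝ, |(fun t s : ℝ => Real.exp (-ρ*|t-s|)) t s| ≤ 1 := fun t s => by
  rw [abs_of_pos (Real.exp_pos _)]
  exact exp_kernel_le_one ρ hρ t s

/-- The main integral representation of the double integral of the kernel. -/
lemma rep (ρ T : ℝ) (hρ : 0 < ρ) (hT : 0 < T) (a b : Measure ℝ)
    [IsFiniteMeasure a] [IsFiniteMeasure b]
    (ha : a (Set.Icc 0 T)ᶜ = 0) (hb : b (Set.Icc 0 T)ᶜ = 0) :
    doubleInt (fun t s => Real.exp (-ρ*|t-s|)) a b
      = (a.withDensity (expW ρ) Set.univ).toReal * (b.withDensity (expW ρ) Set.univ).toReal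
        + ∫ u in Set.Ioc 0 T, (2*ρ*Real.exp (2*ρ*u))
            * (a.withDensity (expW ρ) (Set.Ioi u)).toReal
            * (b.withDensity (expW ρ) (Set.Ioi u)).toReal := by
  classical
  set w := expW ρ with hw
  set K' : ℝ → ℝ → ℝ≥0∞ := fun t s => ENNReal.ofReal (Real.exp (-ρ*|t-s|)) with hK'
  set S : Set ℝ := Set.Ioc 0 T with hS
  set c : ℝ → ℝ≥0∞ := fun u => ENNReal.ofReal (2*ρ*Real.exp (2*ρ*u)) with hc
  set Ga : ℝ → ℝ≥0∞ := fun u => a.withDensity w (Set.Ioi u) with hGa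
  set Gb : ℝ → ℝ≥0∞ := fun u => b.withDensity w (Set.Ioi u) with hGb
  have hcm : Measurable c :=
    ENNReal.measurable_ofReal.comp
      ((measurable_const.mul (Real.measurable_exp.comp (measurable_id.const_mul (2*ρ)))))
  have hGam : Measurable Ga := by
    have : Antitone Ga := fun u v huv => measure_mono (Set.Ioi_subset_Ioi huv)
    exact this.measurable
  have hGbm : Measurable Gb := by
    have : Antitone Gb := fun u v huv => measure_mono (Set.Ioi_subset_Ioi huv)
    exact this.measurable
  have hLa : a.withDensity w Set.univ ≠ ∞ := nu_univ_ne_top hρ a ha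
  have hLb : b.withDensity w Set.univ ≠ ∞ := nu_univ_ne_top hρ b hb
  have hGale : ∀ u, Ga u ≤ a.withDensity w Set.univ := fun u => measure_mono (Set.subset_univ _)
  have hGble : ∀ u, Gb u ≤ b.withDensity w Set.univ := fun u => measure_mono (Set.subset_univ _)
  have hGane : ∀ u, Ga u ≠ ∞ := fun u => ne_top_of_le_ne_top hLa (hGale u)
  have hGbne : ∀ u, Gb u ≠ ∞ := fun u => ne_top_of_le_ne_top hLb (hGble u)
  have hK'm : Measurable (Function.uncurry K') :=
    ENNReal.measurable_ofReal.comp (exp_kernel_meas ρ)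
  -- Step A : doubleInt = toReal of double lintegral
  have hK'le : ∀ t s, K' t s ≤ 1 := fun t s => by
    simpa [hK'] using ENNReal.ofReal_le_one.mpr (exp_kernel_le_one ρ hρ t s)
  have hF : ∀ t, ∫⁻ s, K' t s ∂b ≤ b Set.univ := fun t => by
    calc ∫⁻ s, K' t s ∂b ≤ ∫⁻ _, 1 ∂b := lintegral_mono fun s => hK'le t s
      _ = b Set.univ := by simp
  have hFm : Measurable fun t => ∫⁻ s, K' t s ∂b :=
    Measurable.lintegral_prod_right' (f := Function.uncurry K') hK'm
  have stepA : doubleInt (fun t s => Real.exp (-ρ*|t-s|)) a b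
      = (∫⁻ t, ∫⁻ s, K' t s ∂b ∂a).toReal := by
    unfold doubleInt
    have h1 : ∀ t, ∫ s, Real.exp (-ρ*|t-s|) ∂b = (∫⁻ s, K' t s ∂b).toReal := by
      intro t
      rw [integral_eq_lintegral_of_nonneg_ae (ae_of_all _ fun s => (Real.exp_pos _).le)
        ((exp_kernel_meas ρ).comp measurable_prodMk_left).aestronglyMeasurable]
    calc ∫ t, ∫ s, Real.exp (-ρ*|t-s|) ∂b ∂a
        = ∫ t, (∫⁻ s, K' t s ∂b).toReal ∂a := by
          exact integral_congr_ae (ae_of_all _ h1)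
      _ = (∫⁻ t, ∫⁻ s, K' t s ∂b ∂a).toReal := by
          refine integral_toReal hFm.aemeasurable (ae_of_all _ fun t => ?_)
          exact lt_of_le_of_lt (hF t) (measure_lt_top b _)
  -- pointwise kernel representation
  have hker : ∀ t ∈ Set.Icc (0:ℝ) T, ∀ s ∈ Set.Icc (0:ℝ) T,
      K' t s = w t * (w s * (1 + ∫⁻ u in S,
        c u * (if u < t then (1:ℝ≥0∞) else 0) * (if u < s then (1:ℝ≥0∞) else 0))) := by
    intro t ht s hs
    set m := min t s with hm
    have hm0 : 0 ≤ m := le_min ht.1 hs.1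
    have hmT : m ≤ T := le_trans (min_le_left _ _) ht.2
    have h1 : ∀ u, c u * (if u < t then (1:ℝ≥0∞) else 0) * (if u < s then (1:ℝ≥0∞) else 0)
        = (Set.Iio m).indicator c u := by
      intro u
      by_cases h1 : u < t <;> by_cases h2 : u < s <;>
        simp [Set.indicator_apply, Set.mem_Iio, hm, lt_min_iff, h1, h2]
    have h2 : (∫⁻ u in S, c u * (if u < t then (1:ℝ≥0∞) else 0)
        * (if u < s then (1:ℝ≥0∞) else 0)) = ∫⁻ u in Set.Ioo 0 m, c u := by
      calc (∫⁻ u in S, c u * (if u < t then (1:ℝ≥0∞) else 0) * (if u < s then (1:ℝ≥0∞) else 0))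
          = ∫⁻ u in S, (Set.Iio m).indicator c u := by
            exact lintegral_congr fun u => h1 u
        _ = ∫⁻ u in Set.Iio m, c u ∂(volume.restrict S) := lintegral_indicator measurableSet_Iio c
        _ = ∫⁻ u in Set.Iio m ∩ S, c u := by rw [Measure.restrict_restrict measurableSet_Iio]
        _ = ∫⁻ u in Set.Ioo 0 m, c u := by
            have hseteq : Set.Iio m ∩ S = Set.Ioo 0 m := by
              ext u
              constructor
              · rintro ⟨h1', h2'⟩
                exact ⟨h2'.1, h1'⟩
              · rintro ⟨h1', h2'⟩
                exact ⟨h2', ⟨h1', le_trans h2'.le hmT⟩⟩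
            rw [hseteq]
    have h3 : ∫⁻ u in Set.Ioo 0 m, c u = ENNReal.ofReal (Real.exp (2*ρ*m) - 1) := by
      have hcont : Continuous fun u : ℝ => 2*ρ*Real.exp (2*ρ*u) := by
        continuity
      have hint : IntegrableOn (fun u => 2*ρ*Real.exp (2*ρ*u)) (Set.Ioo 0 m) :=
        (hcont.integrableOn_Icc).mono_set Set.Ioo_subset_Icc_self
      rw [hc, ← ofReal_integral_eq_lintegral_ofReal hint
        (ae_of_all _ fun u => by positivity)]
      congr 1
      rw [← MeasureTheory.integral_Ioc_eq_integral_Ioo, ← intervalIntegral.integral_of_le hm0]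
      have hderiv : ∀ x ∈ Set.uIcc (0:ℝ) m,
          HasDerivAt (fun u => Real.exp (2*ρ*u)) (2*ρ*Real.exp (2*ρ*x)) x := by
        intro x _
        have h := ((hasDerivAt_id x).const_mul (2*ρ)).exp
        simpa [mul_comm] using h
      rw [intervalIntegral.integral_eq_sub_of_hasDerivAt hderiv
        (hcont.intervalIntegrable 0 m)]
      simp [Real.exp_zero]
    have hone : (1:ℝ≥0∞) + ENNReal.ofReal (Real.exp (2*ρ*m) - 1)
        = ENNReal.ofReal (Real.exp (2*ρ*m)) := by
      rw [← ENNReal.ofReal_one, ← ENNReal.ofReal_add (by norm_num)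
        (by nlinarith [Real.one_le_exp (by positivity : (0:ℝ) ≤ 2*ρ*m)])]
      congr 1
      ring
    rw [h2, h3, hone]
    have habs : -ρ*|t-s| = -ρ*t + (-ρ*s + 2*ρ*m) := by
      rcases le_total t s with h | h
      · rw [hm, min_eq_left h, abs_of_nonpos (by linarith)]
        ring
      · rw [hm, min_eq_right h, abs_of_nonneg (by linarith)]
        ring
    show ENNReal.ofReal (Real.exp (-ρ*|t-s|))
        = ENNReal.ofReal (Real.exp (-ρ*t))
          * (ENNReal.ofReal (Real.exp (-ρ*s)) * ENNReal.ofReal (Real.exp (2*ρ*m)))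
    rw [← ENNReal.ofReal_mul (Real.exp_pos _).le, ← ENNReal.ofReal_mul (Real.exp_pos _).le,
      ← Real.exp_add, ← Real.exp_add, habs]
  -- indicator integrals give withDensity measures
  have hIoiB : ∀ (μ : Measure ℝ) (u : ℝ),
      ∫⁻ s, w s * (if u < s then (1:ℝ≥0∞) else 0) ∂μ = μ.withDensity w (Set.Ioi u) := by
    intro μ u
    rw [withDensity_apply _ measurableSet_Ioi, ← lintegral_indicator measurableSet_Ioi]
    refine lintegral_congr fun s => ?_
    by_cases h : u < s <;> simp [Set.indicator_apply, Set.mem_Ioi, h]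
  set k : ℝ → ℝ → ℝ≥0∞ := fun t s => ∫⁻ u in S,
    c u * (if u < t then (1:ℝ≥0∞) else 0) * (if u < s then (1:ℝ≥0∞) else 0) with hk
  set H : ℝ → ℝ≥0∞ := fun t => ∫⁻ u in S,
    (c u * (if u < t then (1:ℝ≥0∞) else 0)) * Gb u with hH
  have hindne : ∀ (v u : ℝ), (if u < v then (1:ℝ≥0∞) else 0) ≠ ∞ := by
    intro v u; split <;> simp
  have inner1 : ∀ t ∈ Set.Icc (0:ℝ) T,
      ∫⁻ s, K' t s ∂b = w t * (b.withDensity w Set.univ + H t) := by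
    intro t ht
    have e1 : ∫⁻ s, K' t s ∂b = ∫⁻ s, w t * (w s * (1 + k t s)) ∂b :=
      lintegral_congr_ae ((ae_mem_Icc b hb).mono fun s hs => hker t ht s hs)
    rw [e1, lintegral_const_mul' _ _ (expW_ne_top ρ t)]
    congr 1
    have e2 : ∀ s, w s * (1 + k t s) = w s + w s * k t s := by
      intro s; rw [mul_add, mul_one]
    rw [lintegral_congr e2, lintegral_add_left (expW_meas ρ)]
    congr 1
    · rw [withDensity_apply _ MeasurableSet.univ, Measure.restrict_univ]
    · have e3 : ∀ s, w s * k t s = ∫⁻ u in S,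
          w s * (c u * (if u < t then (1:ℝ≥0∞) else 0) * (if u < s then (1:ℝ≥0∞) else 0)) :=
        fun s => (lintegral_const_mul' _ _ (expW_ne_top ρ s)).symm
      rw [lintegral_congr e3]
      have hm1 : Measurable (Function.uncurry fun s u =>
          w s * (c u * (if u < t then (1:ℝ≥0∞) else 0) * (if u < s then (1:ℝ≥0∞) else 0))) := by
        refine Measurable.mul ((expW_meas ρ).comp measurable_fst) ?_
        refine Measurable.mul (Measurable.mul (hcm.comp measurable_snd) ?_) ?_
        · exact Measurable.ite (measurableSet_lt measurable_snd measurable_const)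
            measurable_const measurable_const
        · exact Measurable.ite (measurableSet_lt measurable_snd measurable_fst)
            measurable_const measurable_const
      rw [lintegral_lintegral_swap hm1.aemeasurable]
      refine lintegral_congr fun u => ?_
      have e4 : ∀ s, w s * (c u * (if u < t then (1:ℝ≥0∞) else 0)
          * (if u < s then (1:ℝ≥0∞) else 0))
          = (c u * (if u < t then (1:ℝ≥0∞) else 0)) * (w s * (if u < s then (1:ℝ≥0∞) else 0)) :=
        fun s => by ring
      rw [lintegral_congr e4, lintegral_const_mul' _ _
        (ENNReal.mul_ne_top ENNReal.ofReal_ne_top (hindne t u)), hIoiB b u]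
  have stepB : ∫⁻ t, ∫⁻ s, K' t s ∂b ∂a
      = b.withDensity w Set.univ * a.withDensity w Set.univ
        + ∫⁻ u in S, c u * Ga u * Gb u := by
    have e5 : ∫⁻ t, ∫⁻ s, K' t s ∂b ∂a
        = ∫⁻ t, (b.withDensity w Set.univ * w t + w t * H t) ∂a := by
      refine lintegral_congr_ae ((ae_mem_Icc a ha).mono fun t ht => ?_)
      dsimp only
      rw [inner1 t ht, mul_add, mul_comm (w t) (b.withDensity w Set.univ)]
    rw [e5, lintegral_add_left]
    · congr 1
      · rw [lintegral_const_mul' _ _ hLb]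
        congr 1
        rw [withDensity_apply _ MeasurableSet.univ, Measure.restrict_univ]
      · have e6 : ∀ t, w t * H t = ∫⁻ u in S,
            w t * ((c u * (if u < t then (1:ℝ≥0∞) else 0)) * Gb u) :=
          fun t => (lintegral_const_mul' _ _ (expW_ne_top ρ t)).symm
        rw [lintegral_congr e6]
        have hm2 : Measurable (Function.uncurry fun t u =>
            w t * ((c u * (if u < t then (1:ℝ≥0∞) else 0)) * Gb u)) := by
          refine Measurable.mul ((expW_meas ρ).comp measurable_fst) ?_
          refine Measurable.mul (Measurable.mul (hcm.comp measurable_snd) ?_) (hGbm.comp measurable_snd)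
          exact Measurable.ite (measurableSet_lt measurable_snd measurable_fst)
            measurable_const measurable_const
        rw [lintegral_lintegral_swap hm2.aemeasurable]
        refine lintegral_congr fun u => ?_
        have e7 : ∀ t, w t * ((c u * (if u < t then (1:ℝ≥0∞) else 0)) * Gb u)
            = (c u * Gb u) * (w t * (if u < t then (1:ℝ≥0∞) else 0)) := fun t => by ring
        rw [lintegral_congr e7, lintegral_const_mul' _ _
          (ENNReal.mul_ne_top ENNReal.ofReal_ne_top (hGbne u)), hIoiB a u]
        rw [hGa]
        ring
    · exact (expW_meas ρ).const_mul _
  -- finiteness of the integral term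
  set C : ℝ≥0∞ := ENNReal.ofReal (2*ρ*Real.exp (2*ρ*T)) * a.withDensity w Set.univ
      * b.withDensity w Set.univ with hC
  have hCne : C ≠ ∞ :=
    ENNReal.mul_ne_top (ENNReal.mul_ne_top ENNReal.ofReal_ne_top hLa) hLb
  have hIle : ∫⁻ u in S, c u * Ga u * Gb u ≤ C * volume S := by
    have hbound : ∀ᵐ u ∂(volume.restrict S), c u * Ga u * Gb u ≤ C := by
      filter_upwards [ae_restrict_mem measurableSet_Ioc] with u hu
      rw [hC]
      refine mul_le_mul' (mul_le_mul' ?_ (hGale u)) (hGble u)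
      refine ENNReal.ofReal_le_ofReal ?_
      have : Real.exp (2*ρ*u) ≤ Real.exp (2*ρ*T) := Real.exp_le_exp.mpr (by nlinarith [hu.2])
      nlinarith
    calc ∫⁻ u in S, c u * Ga u * Gb u ≤ ∫⁻ _ in S, C ∂volume := lintegral_mono_ae hbound
      _ = C * volume S := by rw [setLIntegral_const]
  have hIfin : ∫⁻ u in S, c u * Ga u * Gb u ≠ ∞ := by
    refine ne_top_of_le_ne_top ?_ hIle
    refine ENNReal.mul_ne_top hCne ?_
    rw [hS, Real.volume_Ioc]
    exact ENNReal.ofReal_ne_top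
  -- convert to real integrals
  have hstepC : (∫⁻ u in S, c u * Ga u * Gb u).toReal
      = ∫ u in S, (2*ρ*Real.exp (2*ρ*u)) * (Ga u).toReal * (Gb u).toReal := by
    rw [← integral_toReal (show AEMeasurable (fun u => c u * Ga u * Gb u) _ from ((hcm.mul hGam).mul hGbm).aemeasurable)
      (ae_of_all _ fun u => ?_)]
    · refine integral_congr_ae (ae_of_all _ fun u => ?_)
      dsimp only
      rw [ENNReal.toReal_mul, ENNReal.toReal_mul, hc, ENNReal.toReal_ofReal (by positivity)]
    · exact ENNReal.mul_lt_top (ENNReal.mul_lt_top ENNReal.ofReal_lt_top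
        (hGane u).lt_top) (hGbne u).lt_top
  rw [stepA, stepB, ENNReal.toReal_add (ENNReal.mul_ne_top hLb hLa) hIfin,
    ENNReal.toReal_mul, hstepC, mul_comm]


lemma key_pos (ρ T : ℝ) (hρ : 0 < ρ) (hT : 0 < T)
    (P M : Measure ℝ) [IsFiniteMeasure P] [IsFiniteMeasure M]
    (hP : P (Set.Icc 0 T)ᶜ = 0) (hM : M (Set.Icc 0 T)ᶜ = 0)
    (hne : P ≠ M) :
    0 < bilinInt (fun t s => Real.exp (-ρ*|t-s|)) P M P M := by
  classical
  set w := expW ρ with hw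
  have hfinP : P.withDensity w Set.univ ≠ ∞ := nu_univ_ne_top hρ P hP
  have hfinM : M.withDensity w Set.univ ≠ ∞ := nu_univ_ne_top hρ M hM
  haveI : IsFiniteMeasure (P.withDensity w) := ⟨hfinP.lt_top⟩
  haveI : IsFiniteMeasure (M.withDensity w) := ⟨hfinM.lt_top⟩
  set S : Set ℝ := Set.Ioc (0:ℝ) T with hS
  haveI hvolS : IsFiniteMeasure (volume.restrict S) :=
    ⟨by rw [Measure.restrict_apply_univ]; exact measure_Ioc_lt_top⟩
  set gP : ℝ → ℝ := fun u => (P.withDensity w (Set.Ioi u)).toReal with hgP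
  set gM : ℝ → ℝ := fun u => (M.withDensity w (Set.Ioi u)).toReal with hgM
  have hganti : ∀ x : Measure ℝ, Antitone fun u => x.withDensity w (Set.Ioi u) :=
    fun x u v huv => measure_mono (Set.Ioi_subset_Ioi huv)
  have hgmeas : ∀ x : Measure ℝ, Measurable fun u => (x.withDensity w (Set.Ioi u)).toReal :=
    fun x => ENNReal.measurable_toReal.comp (hganti x).measurable
  have hgle : ∀ (x : Measure ℝ), x.withDensity w Set.univ ≠ ∞ →
      ∀ u, (x.withDensity w (Set.Ioi u)).toReal ≤ (x.withDensity w Set.univ).toReal :=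
    fun x hx u => ENNReal.toReal_mono hx (measure_mono (Set.subset_univ _))
  -- integrability of products on S
  have hint : ∀ (x y : Measure ℝ), x.withDensity w Set.univ ≠ ∞ → y.withDensity w Set.univ ≠ ∞ →
      Integrable (fun u => (2*ρ*Real.exp (2*ρ*u)) * (x.withDensity w (Set.Ioi u)).toReal
        * (y.withDensity w (Set.Ioi u)).toReal) (volume.restrict S) := by
    intro x y hx hy
    refine Integrable.mono' (integrable_const ((2*ρ*Real.exp (2*ρ*T))
      * (x.withDensity w Set.univ).toReal * (y.withDensity w Set.univ).toReal))
      ?_ ?_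
    · exact ((measurable_const.mul
        (Real.measurable_exp.comp (measurable_id.const_mul (2*ρ)))).mul (hgmeas x)
        |>.mul (hgmeas y)).aestronglyMeasurable
    · filter_upwards [ae_restrict_mem measurableSet_Ioc] with u hu
      rw [Real.norm_eq_abs, abs_of_nonneg (by positivity)]
      have h1 : Real.exp (2*ρ*u) ≤ Real.exp (2*ρ*T) := Real.exp_le_exp.mpr (by nlinarith [hu.2])
      have h2 := hgle x hx u
      have h3 := hgle y hy u
      have h4 : (0:ℝ) ≤ (x.withDensity w (Set.Ioi u)).toReal := ENNReal.toReal_nonneg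
      have h5 : (0:ℝ) ≤ (y.withDensity w (Set.Ioi u)).toReal := ENNReal.toReal_nonneg
      gcongr <;> positivity
  have hintPP := hint P P hfinP hfinP
  have hintPM := hint P M hfinP hfinM
  have hintMP := hint M P hfinM hfinP
  have hintMM := hint M M hfinM hfinM
  set f2 : ℝ → ℝ := fun u => (2*ρ*Real.exp (2*ρ*u)) * (gP u - gM u)^2 with hf2
  have hintf2 : Integrable f2 (volume.restrict S) := by
    have : f2 = fun u => ((2*ρ*Real.exp (2*ρ*u)) * gP u * gP u
        - (2*ρ*Real.exp (2*ρ*u)) * gP u * gM u)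
        - ((2*ρ*Real.exp (2*ρ*u)) * gM u * gP u - (2*ρ*Real.exp (2*ρ*u)) * gM u * gM u) := by
      funext u; rw [hf2]; ring
    rw [this]
    exact ((hintPP.sub hintPM).sub (hintMP.sub hintMM))
  -- the quadratic identity
  have hQ : bilinInt (fun t s => Real.exp (-ρ*|t-s|)) P M P M
      = ((P.withDensity w Set.univ).toReal - (M.withDensity w Set.univ).toReal)^2
        + ∫ u in S, f2 u := by
    unfold bilinInt
    rw [rep ρ T hρ hT P P hP hP, rep ρ T hρ hT P M hP hM,
      rep ρ T hρ hT M P hM hP, rep ρ T hρ hT M M hM hM]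
    have h12 : Integrable (fun u => (2*ρ*Real.exp (2*ρ*u)) * (P.withDensity w (Set.Ioi u)).toReal
          * (P.withDensity w (Set.Ioi u)).toReal
        - (2*ρ*Real.exp (2*ρ*u)) * (P.withDensity w (Set.Ioi u)).toReal
          * (M.withDensity w (Set.Ioi u)).toReal) (volume.restrict S) := hintPP.sub hintPM
    have h34 : Integrable (fun u => (2*ρ*Real.exp (2*ρ*u)) * (M.withDensity w (Set.Ioi u)).toReal
          * (P.withDensity w (Set.Ioi u)).toReal
        - (2*ρ*Real.exp (2*ρ*u)) * (M.withDensity w (Set.Ioi u)).toReal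
          * (M.withDensity w (Set.Ioi u)).toReal) (volume.restrict S) := hintMP.sub hintMM
    have hcomb : ((∫ u in S, (2*ρ*Real.exp (2*ρ*u)) * (P.withDensity w (Set.Ioi u)).toReal
            * (P.withDensity w (Set.Ioi u)).toReal)
          - ∫ u in S, (2*ρ*Real.exp (2*ρ*u)) * (P.withDensity w (Set.Ioi u)).toReal
            * (M.withDensity w (Set.Ioi u)).toReal)
          - ((∫ u in S, (2*ρ*Real.exp (2*ρ*u)) * (M.withDensity w (Set.Ioi u)).toReal
            * (P.withDensity w (Set.Ioi u)).toReal)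
          - ∫ u in S, (2*ρ*Real.exp (2*ρ*u)) * (M.withDensity w (Set.Ioi u)).toReal
            * (M.withDensity w (Set.Ioi u)).toReal)
        = ∫ u in S, f2 u := by
      rw [← integral_sub hintPP hintPM, ← integral_sub hintMP hintMM,
        ← integral_sub h12 h34]
      refine integral_congr_ae (ae_of_all _ fun u => ?_)
      dsimp only
      rw [hf2, hgP, hgM]
      ring
    rw [← hcomb]
    ring
  have hS2 : 0 ≤ ∫ u in S, f2 u := integral_nonneg fun u => by
    rw [hf2]; positivity
  by_contra hcon
  push_neg at hcon
  have hsq : ((P.withDensity w Set.univ).toReal - (M.withDensity w Set.univ).toReal)^2 = 0 := by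
    nlinarith [sq_nonneg ((P.withDensity w Set.univ).toReal - (M.withDensity w Set.univ).toReal)]
  have hLL : (P.withDensity w Set.univ).toReal = (M.withDensity w Set.univ).toReal := by
    have := sq_eq_zero_iff.mp hsq
    linarith
  have hTot : P.withDensity w Set.univ = M.withDensity w Set.univ :=
    (ENNReal.toReal_eq_toReal_iff' hfinP hfinM).mp hLL
  have hzero : ∫ u in S, f2 u = 0 := by linarith
  have haef2 : f2 =ᵐ[volume.restrict S] 0 :=
    (integral_eq_zero_iff_of_nonneg_ae (ae_of_all _ fun u => by rw [hf2]; positivity)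
      hintf2).mp hzero
  have haeg : ∀ᵐ u ∂(volume.restrict S), gP u = gM u := by
    filter_upwards [haef2] with u hu
    have hpos : 0 < 2*ρ*Real.exp (2*ρ*u) := by positivity
    have hu' : 2*ρ*Real.exp (2*ρ*u) * (gP u - gM u)^2 = 0 := by
      have h := hu
      rw [hf2] at h
      simpa using h
    rcases mul_eq_zero.mp hu' with h | h
    · exact absurd h (ne_of_gt hpos)
    · have := sq_eq_zero_iff.mp h
      linarith
  have hbadm : volume ({v : ℝ | ¬ gP v = gM v} ∩ S) = 0 := by
    have h := haeg
    rw [ae_iff, Measure.restrict_apply' measurableSet_Ioc] at h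
    exact h
  -- pointwise equality of survival functions
  have hnull : ∀ (x : Measure ℝ), x (Set.Icc 0 T)ᶜ = 0 → ∀ (N : Set ℝ),
      N ⊆ (Set.Icc 0 T)ᶜ → x.withDensity w N = 0 := by
    intro x hx N hN
    exact measure_mono_null hN ((withDensity_absolutelyContinuous x w) hx)
  have hIoi : ∀ u : ℝ, P.withDensity w (Set.Ioi u) = M.withDensity w (Set.Ioi u) := by
    intro u
    by_cases hu0 : u < 0
    · have hIic : ∀ (x : Measure ℝ), x (Set.Icc 0 T)ᶜ = 0 → x.withDensity w Set.univ ≠ ∞ →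
          x.withDensity w (Set.Ioi u) = x.withDensity w Set.univ := by
        intro x hx hxfin
        have h0 : x.withDensity w (Set.Iic u) = 0 := by
          refine hnull x hx _ fun t ht => ?_
          simp only [Set.mem_compl_iff, Set.mem_Icc, not_and_or]
          left
          push_neg
          calc t ≤ u := ht
            _ < 0 := hu0
        have hc := measure_compl (measurableSet_Iic (a := u))
          (ne_top_of_le_ne_top hxfin (measure_mono (Set.subset_univ _)))
        rw [Set.compl_Iic] at hc
        rw [hc, h0, tsub_zero]
      rw [hIic P hP hfinP, hIic M hM hfinM, hTot]
    · push_neg at hu0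
      by_cases huT : u < T
      · -- approximate from the right by good points
        have hgood : ∀ n : ℕ, ∃ v : ℝ, u < v ∧ v ≤ u + 1/(n+1) ∧ v ∈ S ∧ gP v = gM v := by
          intro n
          by_contra hcont
          push_neg at hcont
          set r := min T (u + 1/(n+1)) with hr
          have hpos1 : (0:ℝ) < 1/(n+1) := by positivity
          have hur : u < r := lt_min huT (by linarith)
          have hsubS : Set.Ioc u r ⊆ S := by
            rw [hS]
            intro v hv
            exact ⟨lt_of_le_of_lt hu0 hv.1, le_trans hv.2 (min_le_left _ _)⟩
          have hsubbad : Set.Ioc u r ⊆ {v : ℝ | ¬ gP v = gM v} := by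
            intro v hv
            exact hcont v hv.1 (le_trans hv.2 (min_le_right _ _)) (hsubS hv)
          have h0 : volume (Set.Ioc u r) = 0 :=
            measure_mono_null (fun v hv => Set.mem_inter (hsubbad hv) (hsubS hv)) hbadm
          rw [Real.volume_Ioc] at h0
          rw [ENNReal.ofReal_eq_zero] at h0
          linarith
        choose v hv1 hv2 hv3 hv4 using hgood
        have hrange : ∀ n : ℕ, (Finset.range (n+1)).Nonempty := fun n =>
          ⟨0, Finset.mem_range.mpr (Nat.succ_pos n)⟩
        set V : ℕ → ℝ := fun n => (Finset.range (n+1)).inf' (hrange n) v with hV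
        have hVgood : ∀ n, u < V n ∧ gP (V n) = gM (V n) := by
          intro n
          obtain ⟨i, _, hieq⟩ := Finset.exists_mem_eq_inf' (hrange n) v
          rw [hV]
          dsimp only
          rw [hieq]
          exact ⟨hv1 i, hv4 i⟩
        have hVle : ∀ n : ℕ, V n ≤ u + 1/(n+1) := fun n =>
          le_trans (Finset.inf'_le v (Finset.self_mem_range_succ n)) (hv2 n)
        have hVanti : ∀ {n m : ℕ}, n ≤ m → V m ≤ V n := by
          intro n m h
          exact Finset.inf'_mono v (Finset.range_subset_range.mpr (by omega)) (hrange n)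
        have hUnion : Set.Ioi u = ⋃ n, Set.Ioi (V n) := by
          ext t
          simp only [Set.mem_Ioi, Set.mem_iUnion]
          constructor
          · intro htu
            obtain ⟨n, hn⟩ := exists_nat_one_div_lt (show 0 < t - u by linarith)
            refine ⟨n, ?_⟩
            have := hVle n
            linarith
          · rintro ⟨n, hn⟩
            exact lt_trans (hVgood n).1 hn
        have hdir : Directed (· ⊆ ·) fun n : ℕ => Set.Ioi (V n) := by
          intro n m
          exact ⟨max n m, Set.Ioi_subset_Ioi (hVanti (le_max_left _ _)),
            Set.Ioi_subset_Ioi (hVanti (le_max_right _ _))⟩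
        have hPe : P.withDensity w (Set.Ioi u) = ⨆ n, P.withDensity w (Set.Ioi (V n)) := by
          rw [hUnion]
          exact hdir.measure_iUnion
        have hMe : M.withDensity w (Set.Ioi u) = ⨆ n, M.withDensity w (Set.Ioi (V n)) := by
          rw [hUnion]
          exact hdir.measure_iUnion
        rw [hPe, hMe]
        refine iSup_congr fun n => ?_
        have := (hVgood n).2
        rw [hgP, hgM] at this
        exact (ENNReal.toReal_eq_toReal_iff' (measure_ne_top _ _) (measure_ne_top _ _)).mp this
      · push_neg at huT
        have hz : ∀ (x : Measure ℝ), x (Set.Icc 0 T)ᶜ = 0 → x.withDensity w (Set.Ioi u) = 0 := by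
          intro x hx
          refine hnull x hx _ fun t ht => ?_
          simp only [Set.mem_compl_iff, Set.mem_Icc, not_and_or]
          right
          push_neg
          calc T ≤ u := huT
            _ < t := ht
        rw [hz P hP, hz M hM]
  have hext : P.withDensity w = M.withDensity w := by
    refine Measure.ext_of_Iic _ _ fun u => ?_
    have h1 := measure_compl (measurableSet_Ioi (a := u)) (measure_ne_top (P.withDensity w) _)
    have h2 := measure_compl (measurableSet_Ioi (a := u)) (measure_ne_top (M.withDensity w) _)
    rw [Set.compl_Ioi] at h1 h2
    rw [h1, h2, hIoi u, hTot]
  have hinvm : Measurable fun t : ℝ => ENNReal.ofReal (Real.exp (ρ*t)) :=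
    ENNReal.measurable_ofReal.comp (Real.measurable_exp.comp (measurable_id.const_mul ρ))
  have hwinv : ∀ x : Measure ℝ,
      (x.withDensity w).withDensity (fun t => ENNReal.ofReal (Real.exp (ρ*t))) = x := by
    intro x
    rw [← withDensity_mul _ (expW_meas ρ) hinvm]
    have hone : (w * fun t => ENNReal.ofReal (Real.exp (ρ*t))) = fun _ => (1:ℝ≥0∞) := by
      funext t
      rw [Pi.mul_apply, hw]
      show ENNReal.ofReal (Real.exp (-ρ*t)) * ENNReal.ofReal (Real.exp (ρ*t)) = 1
      rw [← ENNReal.ofReal_mul (Real.exp_pos _).le, ← Real.exp_add]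
      norm_num
    rw [hone]
    exact withDensity_one
  exact hne (by rw [← hwinv P, hext, hwinv M])


lemma causal_meas (ρ : ℝ) :
    Measurable (Function.uncurry (fun t s : ℝ => if s < t then Real.exp (-ρ*(t-s)) else 0)) := by
  refine Measurable.ite (measurableSet_lt measurable_snd measurable_fst) ?_ measurable_const
  exact Real.measurable_exp.comp ((measurable_fst.sub measurable_snd).const_mul (-ρ))

lemma causal_bdd (ρ : ℝ) (hρ : 0 < ρ) :
    ∀ t s : ℝ, |(fun t s : ℝ => if s < t then Real.exp (-ρ*(t-s)) else 0) t s| ≤ 1 := by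
  intro t s
  dsimp only
  split
  · rename_i h
    rw [abs_of_pos (Real.exp_pos _)]
    refine Real.exp_le_one_iff.mpr ?_
    nlinarith
  · norm_num


end CostAux

open CostAux

/-- Strict convexity of the cost functional `X ↦ C(X|Y)` on the space of
right-continuous bounded-variation strategies on `[0,T]` with `X_{0-} = x` and
`X_T = 0` (encoded via Jordan pairs of Stieltjes measures supported on `[0,T]` with
total signed mass `-x`), and strict positive definiteness of the kernel
`e^{-ρ|t-s|}` on the difference of two distinct such strategies. -/
theorem cost_strictly_convex (ρ T θ x y : ℝ)
    (hρ : 0 < ρ) (hT : 0 < T) (hθ : 0 ≤ θ)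
    (Yp Ym X0p X0m X1p X1m : Measure ℝ)
    [IsFiniteMeasure Yp] [IsFiniteMeasure Ym]
    [IsFiniteMeasure X0p] [IsFiniteMeasure X0m]
    [IsFiniteMeasure X1p] [IsFiniteMeasure X1m]
    (hYsupp : Yp (Set.Icc 0 T)ᶜ = 0 ∧ Ym (Set.Icc 0 T)ᶜ = 0)
    (hX0supp : X0p (Set.Icc 0 T)ᶜ = 0 ∧ X0m (Set.Icc 0 T)ᶜ = 0)
    (hX1supp : X1p (Set.Icc 0 T)ᶜ = 0 ∧ X1m (Set.Icc 0 T)ᶜ = 0)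
    (hYmass : (Yp Set.univ).toReal - (Ym Set.univ).toReal = -y)
    (hX0mass : (X0p Set.univ).toReal - (X0m Set.univ).toReal = -x)
    (hX1mass : (X1p Set.univ).toReal - (X1m Set.univ).toReal = -x)
    (hne : X1p + X0m ≠ X0p + X1m) :
    (∀ α : ℝ, α ∈ Set.Ioo (0:ℝ) 1 →
      liqCost ρ θ
          (ENNReal.ofReal α • X1p + ENNReal.ofReal (1-α) • X0p)
          (ENNReal.ofReal α • X1m + ENNReal.ofReal (1-α) • X0m) Yp Ym
        < α * liqCost ρ θ X1p X1m Yp Ym + (1-α) * liqCost ρ θ X0p X0m Yp Ym) ∧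
    0 < bilinInt (fun t s => Real.exp (-ρ*|t-s|))
        (X1p + X0m) (X0p + X1m) (X1p + X0m) (X0p + X1m) := by
  have hKm := exp_kernel_meas ρ
  have hKb := exp_kernel_bdd ρ hρ
  have hKcm := causal_meas ρ
  have hKcb := causal_bdd ρ hρ
  have hKdm := diag_meas
  have hKdb := diag_bdd
  have hPsupp : (X1p + X0m) (Set.Icc 0 T)ᶜ = 0 := by
    rw [Measure.add_apply, hX1supp.1, hX0supp.2, add_zero]
  have hMsupp : (X0p + X1m) (Set.Icc 0 T)ᶜ = 0 := by
    rw [Measure.add_apply, hX0supp.1, hX1supp.2, add_zero]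
  have hQpos : 0 < bilinInt (fun t s => Real.exp (-ρ*|t-s|))
      (X1p + X0m) (X0p + X1m) (X1p + X0m) (X0p + X1m) :=
    key_pos ρ T hρ hT (X1p + X0m) (X0p + X1m) hPsupp hMsupp hne
  have hEnn : 0 ≤ bilinInt (fun t s => if s = t then (1:ℝ) else 0)
      (X1p + X0m) (X0p + X1m) (X1p + X0m) (X0p + X1m) :=
    diag_nonneg (X1p + X0m) (X0p + X1m)
  refine ⟨?_, hQpos⟩
  intro α hα
  obtain ⟨hα0, hα1⟩ := hα
  have h0 : 0 ≤ α := hα0.le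
  have h1 : 0 ≤ 1 - α := by linarith
  haveI := smul_fin (ENNReal.ofReal α) ENNReal.ofReal_ne_top X1p
  haveI := smul_fin (ENNReal.ofReal α) ENNReal.ofReal_ne_top X1m
  haveI := smul_fin (ENNReal.ofReal (1-α)) ENNReal.ofReal_ne_top X0p
  haveI := smul_fin (ENNReal.ofReal (1-α)) ENNReal.ofReal_ne_top X0m
  have e1 : bilinInt (fun t s => Real.exp (-ρ*|t-s|))
      (ENNReal.ofReal α • X1p + ENNReal.ofReal (1-α) • X0p)
      (ENNReal.ofReal α • X1m + ENNReal.ofReal (1-α) • X0m)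
      (ENNReal.ofReal α • X1p + ENNReal.ofReal (1-α) • X0p)
      (ENNReal.ofReal α • X1m + ENNReal.ofReal (1-α) • X0m)
      = α * (α * bilinInt (fun t s => Real.exp (-ρ*|t-s|)) X1p X1m X1p X1m
          + (1-α) * bilinInt (fun t s => Real.exp (-ρ*|t-s|)) X1p X1m X0p X0m)
        + (1-α) * (α * bilinInt (fun t s => Real.exp (-ρ*|t-s|)) X0p X0m X1p X1m
          + (1-α) * bilinInt (fun t s => Real.exp (-ρ*|t-s|)) X0p X0m X0p X0m) := by
    rw [bilin_comb_left hKm hKb h0 h1, bilin_comb_right hKm hKb h0 h1,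
      bilin_comb_right hKm hKb h0 h1]
  have e2 : bilinInt (fun t s => if s < t then Real.exp (-ρ*(t-s)) else 0)
      (ENNReal.ofReal α • X1p + ENNReal.ofReal (1-α) • X0p)
      (ENNReal.ofReal α • X1m + ENNReal.ofReal (1-α) • X0m) Yp Ym
      = α * bilinInt (fun t s => if s < t then Real.exp (-ρ*(t-s)) else 0) X1p X1m Yp Ym
        + (1-α) * bilinInt (fun t s => if s < t then Real.exp (-ρ*(t-s)) else 0) X0p X0m Yp Ym :=
    bilin_comb_left hKcm hKcb h0 h1 _ _ _ _ _ _
  have e3 : bilinInt (fun t s => if s = t then (1:ℝ) else 0)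
      (ENNReal.ofReal α • X1p + ENNReal.ofReal (1-α) • X0p)
      (ENNReal.ofReal α • X1m + ENNReal.ofReal (1-α) • X0m) Yp Ym
      = α * bilinInt (fun t s => if s = t then (1:ℝ) else 0) X1p X1m Yp Ym
        + (1-α) * bilinInt (fun t s => if s = t then (1:ℝ) else 0) X0p X0m Yp Ym :=
    bilin_comb_left hKdm hKdb h0 h1 _ _ _ _ _ _
  have e4 : bilinInt (fun t s => if s = t then (1:ℝ) else 0)
      (ENNReal.ofReal α • X1p + ENNReal.ofReal (1-α) • X0p)
      (ENNReal.ofReal α • X1m + ENNReal.ofReal (1-α) • X0m)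
      (ENNReal.ofReal α • X1p + ENNReal.ofReal (1-α) • X0p)
      (ENNReal.ofReal α • X1m + ENNReal.ofReal (1-α) • X0m)
      = α * (α * bilinInt (fun t s => if s = t then (1:ℝ) else 0) X1p X1m X1p X1m
          + (1-α) * bilinInt (fun t s => if s = t then (1:ℝ) else 0) X1p X1m X0p X0m)
        + (1-α) * (α * bilinInt (fun t s => if s = t then (1:ℝ) else 0) X0p X0m X1p X1m
          + (1-α) * bilinInt (fun t s => if s = t then (1:ℝ) else 0) X0p X0m X0p X0m) := by
    rw [bilin_comb_left hKdm hKdb h0 h1, bilin_comb_right hKdm hKdb h0 h1,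
      bilin_comb_right hKdm hKdb h0 h1]
  have eQ : bilinInt (fun t s => Real.exp (-ρ*|t-s|))
      (X1p + X0m) (X0p + X1m) (X1p + X0m) (X0p + X1m)
      = bilinInt (fun t s => Real.exp (-ρ*|t-s|)) X1p X1m X1p X1m
        - bilinInt (fun t s => Real.exp (-ρ*|t-s|)) X1p X1m X0p X0m
        - bilinInt (fun t s => Real.exp (-ρ*|t-s|)) X0p X0m X1p X1m
        + bilinInt (fun t s => Real.exp (-ρ*|t-s|)) X0p X0m X0p X0m :=
    bilin_diff hKm hKb _ _ _ _
  have eE : bilinInt (fun t s => if s = t then (1:ℝ) else 0)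
      (X1p + X0m) (X0p + X1m) (X1p + X0m) (X0p + X1m)
      = bilinInt (fun t s => if s = t then (1:ℝ) else 0) X1p X1m X1p X1m
        - bilinInt (fun t s => if s = t then (1:ℝ) else 0) X1p X1m X0p X0m
        - bilinInt (fun t s => if s = t then (1:ℝ) else 0) X0p X0m X1p X1m
        + bilinInt (fun t s => if s = t then (1:ℝ) else 0) X0p X0m X0p X0m :=
    bilin_diff hKdm hKdb _ _ _ _
  have hiden : α * liqCost ρ θ X1p X1m Yp Ym + (1-α) * liqCost ρ θ X0p X0m Yp Ym
      - liqCost ρ θ (ENNReal.ofReal α • X1p + ENNReal.ofReal (1-α) • X0p)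
          (ENNReal.ofReal α • X1m + ENNReal.ofReal (1-α) • X0m) Yp Ym
      = α*(1-α)*((1/2) * bilinInt (fun t s => Real.exp (-ρ*|t-s|))
            (X1p + X0m) (X0p + X1m) (X1p + X0m) (X0p + X1m)
          + θ * bilinInt (fun t s => if s = t then (1:ℝ) else 0)
            (X1p + X0m) (X0p + X1m) (X1p + X0m) (X0p + X1m)) := by
    unfold liqCost
    rw [e1, e2, e3, e4, eQ, eE]
    ring
  have hpos : 0 < α*(1-α)*((1/2) * bilinInt (fun t s => Real.exp (-ρ*|t-s|))
        (X1p + X0m) (X0p + X1m) (X1p + X0m) (X0p + X1m)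
      + θ * bilinInt (fun t s => if s = t then (1:ℝ) else 0)
        (X1p + X0m) (X0p + X1m) (X1p + X0m) (X0p + X1m)) := by
    refine mul_pos (mul_pos hα0 (by linarith)) ?_
    have h2 : 0 < (1/2 : ℝ) * bilinInt (fun t s => Real.exp (-ρ*|t-s|))
        (X1p + X0m) (X0p + X1m) (X1p + X0m) (X0p + X1m) := by linarith
    have h3 : 0 ≤ θ * bilinInt (fun t s => if s = t then (1:ℝ) else 0)
        (X1p + X0m) (X0p + X1m) (X1p + X0m) (X0p + X1m) := mul_nonneg hθ hEnn
    linarith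
  linarith
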